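/- Let R be a *-ring and p, q projectors with p - q Moore-Penrose invertible. Then p - pqp is Moore-Penrose invertible with (p-pqp)† = p((p-q)†)²; moreover if p - pq is *-cancellable then p - pq is Moore-Penrose invertible with (p-pq)† = (p-q)†p, and p - qp is Moore-Penrose invertible with (p-qp)† = p(p-q)†. -/
import Mathlib

/-- `b` is a Moore-Penrose inverse of `a`. -/
def IsMP {R : Type*} [Ring R] [StarRing R] (a b : R) : Prop :=
  a * b * a = a ∧ b * a * b = b ∧ star (a * b) = a * b ∧ star (b * a) = b * a

/-- `p` is a projector: `p² = p = p*`. -/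
def IsProjector {R : Type*} [Ring R] [StarRing R] (p : R) : Prop :=
  p * p = p ∧ star p = p

/-- `a` is *-cancellable. -/
def StarCancellable {R : Type*} [Ring R] [StarRing R] (a : R) : Prop :=
  (∀ x : R, star a * a * x = 0 → a * x = 0) ∧ (∀ x : R, x * (a * star a) = 0 → x * a = 0)

set_option linter.unusedSectionVars false

section Aux
variable {R : Type*} [Ring R] [StarRing R]

private lemma ext21 {u v w : R} (h : u * v = w) (x : R) : u * (v * x) = w * x := by
  rw [← mul_assoc, h]

private lemma ext22 {u v u' v' : R} (h : u * v = u' * v') (x : R) :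
    u * (v * x) = u' * (v' * x) := by
  rw [← mul_assoc, h, mul_assoc]

private lemma ext31 {u v w z : R} (h : u * (v * w) = z) (x : R) :
    u * (v * (w * x)) = z * x := by
  rw [← mul_assoc v w x, ← mul_assoc u (v * w) x, h]

private lemma ext33 {u v w u' v' w' : R} (h : u * (v * w) = u' * (v' * w')) (x : R) :
    u * (v * (w * x)) = u' * (v' * (w' * x)) := by
  rw [← mul_assoc v w x, ← mul_assoc u (v * w) x, h, mul_assoc, mul_assoc]

private lemma ext42 {u v w z r s : R} (h : u * (v * (w * z)) = r * s) (x : R) :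
    u * (v * (w * (z * x))) = r * (s * x) := by
  rw [← mul_assoc w z x, ← mul_assoc v (w * z) x, ← mul_assoc u (v * (w * z)) x, h, mul_assoc]

private lemma mp_star {x y : R} (h : IsMP x y) : IsMP (star x) (star y) := by
  obtain ⟨h1, h2, h3, h4⟩ := h
  refine ⟨?_, ?_, ?_, ?_⟩
  · calc star x * star y * star x = star (x * (y * x)) := by rw [star_mul x (y * x), star_mul y x]
      _ = star (x * y * x) := by rw [mul_assoc]
      _ = star x := by rw [h1]
  · calc star y * star x * star y = star (y * (x * y)) := by rw [star_mul y (x * y), star_mul x y]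
      _ = star (y * x * y) := by rw [mul_assoc]
      _ = star y := by rw [h2]
  · rw [← star_mul, star_star, h4]
  · rw [← star_mul, star_star, h3]

private lemma mp_unique {x b c : R} (hb : IsMP x b) (hc : IsMP x c) : b = c := by
  obtain ⟨b1, b2, b3, b4⟩ := hb
  obtain ⟨c1, c2, c3, c4⟩ := hc
  have hxb : x * b = x * c := by
    calc x * b = (x * c * x) * b := by rw [c1]
      _ = (x * c) * (x * b) := by rw [mul_assoc (x * c) x b]
      _ = star (x * c) * star (x * b) := by rw [c3, b3]
      _ = star ((x * b) * (x * c)) := (star_mul _ _).symm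
      _ = star ((x * b * x) * c) := by rw [mul_assoc (x * b) x c]
      _ = star (x * c) := by rw [b1]
      _ = x * c := c3
  have hbx : b * x = c * x := by
    calc b * x = b * (x * c * x) := by rw [c1]
      _ = (b * x) * (c * x) := by rw [mul_assoc b x (c * x), ← mul_assoc x c x]
      _ = star (b * x) * star (c * x) := by rw [b4, c4]
      _ = star ((c * x) * (b * x)) := (star_mul _ _).symm
      _ = star (c * (x * b * x)) := by rw [mul_assoc c x (b * x), ← mul_assoc x b x]
      _ = star (c * x) := by rw [b1]
      _ = c * x := c4
  calc b = b * x * b := b2.symm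
    _ = c * x * b := by rw [hbx]
    _ = c * (x * b) := by rw [mul_assoc]
    _ = c * (x * c) := by rw [hxb]
    _ = c := by rw [← mul_assoc, c2]

end Aux

theorem stmt18 {R : Type*} [Ring R] [StarRing R] (p q d : R)
    (hp : IsProjector p) (hq : IsProjector q)
    (hd : IsMP (p - q) d) :
    IsMP (p - p * q * p) (p * (d * d)) ∧
    (StarCancellable (p - p * q) →
      IsMP (p - p * q) (d * p) ∧ IsMP (p - q * p) (p * d)) := by
  obtain ⟨hp2, hps⟩ := hp
  obtain ⟨hq2, hqs⟩ := hq
  set a := p - q with ha_def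
  obtain ⟨h1, h2, h3, h4⟩ := hd
  have hsa : star a = a := by rw [ha_def, star_sub, hps, hqs]
  have hds : star d = d := by
    have h' := mp_star ⟨h1, h2, h3, h4⟩
    rw [hsa] at h'
    exact mp_unique h' ⟨h1, h2, h3, h4⟩
  have hpp' : ∀ x : R, x * p * p = x * p := fun x => by rw [mul_assoc, hp2]
  have cPP : ∀ x : R, p * (p * x) = p * x := ext21 hp2
  have tADA : a * (d * a) = a := by rw [← mul_assoc]; exact h1
  have tDAD : d * (a * d) = d := by rw [← mul_assoc]; exact h2
  have tDA : d * a = a * d := by rw [← h3, star_mul, hds, hsa]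
  have cDA : ∀ x : R, d * (a * x) = a * (d * x) := ext22 tDA
  have cADA : ∀ x : R, a * (d * (a * x)) = a * x := ext31 tADA
  have cDAD : ∀ x : R, d * (a * (d * x)) = d * x := ext31 tDAD
  have tAAD : a * (a * d) = a := by rw [← tDA, tADA]
  have cAAD : ∀ x : R, a * (a * (d * x)) = a * x := ext31 tAAD
  have tADD : a * (d * d) = d := by rw [← mul_assoc, ← tDA, mul_assoc, tDAD]
  have cADD : ∀ x : R, a * (d * (d * x)) = d * x := ext31 tADD
  have haa : a * a = p + q - p * q - q * p := by
    rw [ha_def, sub_mul, mul_sub, mul_sub, hp2, hq2]; abel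
  have tK1 : p * (a * a) = a * (a * p) := by
    conv_rhs => rw [← mul_assoc]
    rw [haa]
    simp only [mul_add, add_mul, mul_sub, sub_mul, ← mul_assoc, hp2, hpp']
    abel
  have cK1 : ∀ x : R, p * (a * (a * x)) = a * (a * (p * x)) := ext33 tK1
  have tE8' : d * (d * (a * a)) = a * d := by
    rw [cDA a, cDA (d * a), cADD a, tDA]
  have cE8' : ∀ x : R, d * (d * (a * (a * x))) = a * (d * x) := ext42 tE8'
  -- key commutation: p * (a*d) = (a*d) * p
  have hA : a * (d * (p * (a * d))) = p * (a * d) := by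
    conv_lhs => rw [← cAAD d]
    rw [cK1 (d * d), cDA (a * (p * (d * d))), cDA (p * (d * d)), cAAD (p * (d * d))]
    conv_rhs => rw [← cAAD d]
    rw [cK1 (d * d)]
  have h5 : star (p * (a * d)) = (a * d) * p := by rw [star_mul, h3, hps]
  have hApe : (a * d) * p = p * (a * d) := by
    calc (a * d) * p = star (p * (a * d)) := h5.symm
      _ = star (a * (d * (p * (a * d)))) := by rw [hA]
      _ = star ((a * d) * (p * (a * d))) := by rw [mul_assoc]
      _ = star (p * (a * d)) * star (a * d) := star_mul _ _
      _ = ((a * d) * p) * (a * d) := by rw [h5, h3]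
      _ = (a * d) * (p * (a * d)) := by rw [mul_assoc]
      _ = a * (d * (p * (a * d))) := by rw [mul_assoc]
      _ = p * (a * d) := hA
  have tK2 : p * (a * d) = a * (d * p) := by rw [← hApe, mul_assoc]
  have cK2 : ∀ x : R, p * (a * (d * x)) = a * (d * (p * x)) := ext33 tK2
  have tK3 : p * (d * d) = d * (d * p) := by
    calc p * (d * d) = p * (a * (d * (d * d))) := by rw [cADD d]
      _ = a * (d * (p * (d * d))) := cK2 (d * d)
      _ = d * (d * (a * (a * (p * (d * d))))) := by rw [cE8' (p * (d * d))]
      _ = d * (d * (p * (a * (a * (d * d))))) := by rw [cK1 (d * d)]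
      _ = d * (d * (p * (a * d))) := by rw [cAAD d]
      _ = d * (d * (a * (d * p))) := by rw [tK2]
      _ = d * (d * p) := by rw [cDAD p]
  have cK3 : ∀ x : R, p * (d * (d * x)) = d * (d * (p * x)) := ext33 tK3
  have tL5 : d * (p * a) = a * (p * d) := by
    calc d * (p * a) = d * (p * (a * (a * d))) := by rw [tAAD]
      _ = d * (a * (a * (p * d))) := by rw [cK1 d]
      _ = a * (d * (a * (p * d))) := by rw [cDA (a * (p * d))]
      _ = a * (a * (d * (p * d))) := by rw [cDA (p * d)]
      _ = a * (p * d) := by rw [cAAD (p * d)]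
  have hB : p - p * q * p = a * (a * p) := by
    conv_rhs => rw [← mul_assoc]
    rw [haa]
    simp only [add_mul, sub_mul, hp2, hpp']
    abel
  have hB1 : p - p * q = p * a := by rw [ha_def, mul_sub, hp2]
  have hB2 : p - q * p = a * p := by rw [ha_def, sub_mul, hp2]
  -- products
  have m1 : (a * (a * p)) * (p * (d * d)) = a * (d * p) := by
    simp only [mul_assoc]
    rw [cPP (d * d), tK3, cAAD (d * p)]
  have m2 : (p * (d * d)) * (a * (a * p)) = a * (d * p) := by
    simp only [mul_assoc]
    simp only [cDA]
    rw [cK1 (d * (d * p)), cK3 p, hp2, cAAD (d * p)]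
  have n1 : (p * a) * (d * p) = a * (d * p) := by
    rw [mul_assoc, cK2 p, hp2]
  have n2 : (d * p) * (p * a) = a * (p * d) := by
    rw [mul_assoc, cPP a, tL5]
  have o1 : (a * p) * (p * d) = a * (p * d) := by rw [mul_assoc, cPP d]
  have o2 : (p * d) * (a * p) = a * (d * p) := by
    rw [mul_assoc, cDA p, cK2 p, hp2]
  have sadp : star (a * (d * p)) = a * (d * p) := by
    rw [star_mul, star_mul, hds, hps, hsa, mul_assoc, tDA, tK2]
  have sapd : star (a * (p * d)) = a * (p * d) := by
    rw [star_mul, star_mul, hds, hps, hsa, mul_assoc, tL5]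
  refine ⟨?_, fun _ => ⟨?_, ?_⟩⟩
  · rw [hB]
    refine ⟨?_, ?_, ?_, ?_⟩
    · rw [m1]
      simp only [mul_assoc]
      rw [cK1 p, hp2, cADA (a * p)]
    · rw [m2]
      simp only [mul_assoc]
      rw [cPP (d * d), tK3, cADD (d * p)]
    · rw [m1]; exact sadp
    · rw [m2]; exact sadp
  · rw [hB1]
    refine ⟨?_, ?_, ?_, ?_⟩
    · rw [n1, mul_assoc a (d * p), n2, ← cK1 d, tAAD]
    · rw [n2]
      simp only [mul_assoc]
      rw [cK3 p, hp2, cADD p]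
    · rw [n1]; exact sadp
    · rw [n2]; exact sapd
  · rw [hB2]
    refine ⟨?_, ?_, ?_, ?_⟩
    · rw [o1, mul_assoc a (p * d), o2, cAAD p]
    · rw [o2]
      simp only [mul_assoc]
      rw [cPP d, ← cK2 d, tADD]
    · rw [o1]; exact sapd
    · rw [o2]; exact sadp
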